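/- For the extragradient step as above with η ∈ (0, 1/L), the potential V₁ = ‖ηF(z₁)+ηc₁‖² + ⟨ηF(z₁)+ηc₁, z₁ − z₀⟩ satisfies V₁ ≤ [(1+ηL+η²L²)(2+2ηL+η²L²)/(1−η²L²)]·‖z₀ − z*‖². -/

import Mathlib

open RealInnerProductSpace
set_option maxHeartbeats 800000

theorem stmt_10 {n : ℕ}
    (Z : Set (EuclideanSpace ℝ (Fin n))) (hZc : IsClosed Z) (hZconv : Convex ℝ Z)
    (F : EuclideanSpace ℝ (Fin n) → EuclideanSpace ℝ (Fin n))
    (L η : ℝ) (hL : 0 < L)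
    (hmono : ∀ z ∈ Z, ∀ z' ∈ Z, 0 ≤ ⟪F z - F z', z - z'⟫)
    (hlip : ∀ z ∈ Z, ∀ z' ∈ Z, ‖F z - F z'‖ ≤ L * ‖z - z'‖)
    (P : EuclideanSpace ℝ (Fin n) → EuclideanSpace ℝ (Fin n))
    (hP : ∀ x, P x ∈ Z ∧ ∀ y ∈ Z, ⟪x - P x, y - P x⟫ ≤ 0)
    (zs : EuclideanSpace ℝ (Fin n)) (hzs : zs ∈ Z)
    (hsol : ∀ y ∈ Z, ⟪-F zs, y - zs⟫ ≤ 0)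
    (hη : 0 < η) (hηL : η < 1 / L)
    (z0 : EuclideanSpace ℝ (Fin n)) (hz0 : z0 ∈ Z)
    (zh z1 c1 : EuclideanSpace ℝ (Fin n))
    (hzh : zh = P (z0 - η • F z0))
    (hz1 : z1 = P (z0 - η • F zh))
    (hc1 : c1 = (1/η) • (z0 - η • F zh - z1)) :
    ‖η • F z1 + η • c1‖^2 + ⟪η • F z1 + η • c1, z1 - z0⟫ ≤
      (1 + η*L + η^2*L^2) * (2 + 2*η*L + η^2*L^2) / (1 - η^2*L^2) * ‖z0 - zs‖^2 := by
  have htL : η * L < 1 := (lt_div_iff₀ hL).mp hηL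
  have htL0 : 0 < η * L := mul_pos hη hL
  -- nonexpansiveness of P
  have hne : ∀ x y, ‖P x - P y‖ ≤ ‖x - y‖ := by
    intro x y
    have h1 := (hP x).2 (P y) (hP y).1
    have h2 := (hP y).2 (P x) (hP x).1
    have key : ‖P x - P y‖^2 ≤ ⟪x - y, P x - P y⟫ := by
      have e := real_inner_self_eq_norm_sq (P x - P y)
      simp only [inner_sub_left, inner_sub_right] at h1 h2 e ⊢
      linarith [real_inner_comm x (P y), real_inner_comm y (P x), real_inner_comm (P x) (P y),
        real_inner_comm x (P x), real_inner_comm y (P y)]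
    have hcs := real_inner_le_norm (x - y) (P x - P y)
    nlinarith [norm_nonneg (P x - P y), norm_nonneg (x - y)]
  have hzhZ : zh ∈ Z := hzh ▸ (hP _).1
  have hz1Z : z1 ∈ Z := hz1 ▸ (hP _).1
  -- projection variational inequalities
  have h1 : ⟪(z0 - η • F z0) - zh, z1 - zh⟫ ≤ 0 := by
    rw [hzh]; exact (hP _).2 z1 hz1Z
  have h2 : ⟪(z0 - η • F zh) - z1, zs - z1⟫ ≤ 0 := by
    rw [hz1]; exact (hP _).2 zs hzs
  -- F zh has nonneg inner with zh - zs
  have h5 : 0 ≤ ⟪F zh, zh - zs⟫ := by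
    have h3 := hmono zh hzhZ zs hzs
    have h4 := hsol zh hzhZ
    simp only [inner_sub_left, inner_neg_left] at h3 h4 ⊢
    linarith
  -- scalars
  set a := ‖z0 - zh‖ with ha
  set b := ‖z1 - zh‖ with hb
  set s := ‖z0 - zs‖ with hs
  -- b ≤ η L a
  have hba : b ≤ η * L * a := by
    have e : z1 - zh = P (z0 - η • F zh) - P (z0 - η • F z0) := by rw [hz1, hzh]
    have := hne (z0 - η • F zh) (z0 - η • F z0)
    have e2 : (z0 - η • F zh) - (z0 - η • F z0) = η • (F z0 - F zh) := by
      rw [smul_sub]; abel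
    rw [e2] at this
    rw [norm_smul] at this
    have hl := hlip z0 hz0 zh hzhZ
    calc b ≤ ‖η‖ * ‖F z0 - F zh‖ := by rw [hb, e]; exact this
      _ ≤ η * (L * a) := by
          rw [Real.norm_eq_abs, abs_of_pos hη]
          exact mul_le_mul_of_nonneg_left hl hη.le
      _ = η * L * a := by ring
  -- lipschitz for z1, zh
  have hl2 : ‖F z1 - F zh‖ ≤ L * b := hlip z1 hz1Z zh hzhZ
  -- w rewrite
  have hw : η • F z1 + η • c1 = (z0 - z1) + η • (F z1 - F zh) := by
    rw [hc1, smul_smul, mul_one_div_cancel hη.ne', one_smul, smul_sub]; abel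
  set w := η • F z1 + η • c1 with hwdef
  -- norm of w
  have hwn : ‖w‖ ≤ ‖z0 - z1‖ + η * L * b := by
    rw [hw]
    calc ‖(z0 - z1) + η • (F z1 - F zh)‖ ≤ ‖z0 - z1‖ + ‖η • (F z1 - F zh)‖ := norm_add_le _ _
      _ ≤ ‖z0 - z1‖ + η * L * b := by
          rw [norm_smul, Real.norm_eq_abs, abs_of_pos hη, mul_assoc]
          exact add_le_add (le_refl _) (mul_le_mul_of_nonneg_left hl2 hη.le)
  -- triangle for z0 - z1
  have hd : ‖z0 - z1‖ ≤ a + b := by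
    have : z0 - z1 = (z0 - zh) + -(z1 - zh) := by abel
    rw [this]
    calc ‖(z0 - zh) + -(z1 - zh)‖ ≤ ‖z0 - zh‖ + ‖-(z1 - zh)‖ := norm_add_le _ _
      _ = a + b := by rw [norm_neg]
  -- main energy inequality: (1 - η²L²) a² ≤ s²
  have hmain : (1 - (η*L)^2) * a^2 ≤ s^2 := by
    -- r² = s² - ‖z0-z1‖² + 2⟪z0-z1, zs-z1⟫ and chain
    have hr0 : (0:ℝ) ≤ ‖z1 - zs‖^2 := sq_nonneg _
    -- expand h2: ⟪z0 - z1, zs - z1⟫ ≤ η * ⟪F zh, zs - z1⟫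
    have h2' : ⟪z0 - z1, zs - z1⟫ ≤ η * ⟪F zh, zs - z1⟫ := by
      have e : (z0 - η • F zh) - z1 = (z0 - z1) - η • F zh := by abel
      rw [e, inner_sub_left, real_inner_smul_left] at h2
      linarith
    -- expand h1: ⟪z0 - zh, z1 - zh⟫ ≤ η * ⟪F z0, z1 - zh⟫
    have h1' : ⟪z0 - zh, z1 - zh⟫ ≤ η * ⟪F z0, z1 - zh⟫ := by
      have e : (z0 - η • F z0) - zh = (z0 - zh) - η • F z0 := by abel
      rw [e, inner_sub_left, real_inner_smul_left] at h1
      linarith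
    -- split: ⟪F zh, zs - z1⟫ = ⟪F zh, zs - zh⟫ + ⟪F zh, zh - z1⟫
    have hsplit : ⟪F zh, zs - z1⟫ = ⟪F zh, zs - zh⟫ + ⟪F zh, zh - z1⟫ := by
      rw [← inner_add_right]; congr 1; abel
    have hsplit2 : ⟪F zh, zs - zh⟫ ≤ 0 := by
      have : ⟪F zh, zs - zh⟫ = -⟪F zh, zh - zs⟫ := by rw [← inner_neg_right]; congr 1; abel
      linarith
    -- F z0 split: η⟪F zh, zh - z1⟫ = -η⟪F z0, z1 - zh⟫ + η⟪F z0 - F zh, z1 - zh⟫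
    have hFsplit : ⟪F zh, zh - z1⟫ = -⟪F z0, z1 - zh⟫ + ⟪F z0 - F zh, z1 - zh⟫ := by
      rw [inner_sub_left]
      have : ⟪F zh, zh - z1⟫ = -⟪F zh, z1 - zh⟫ := by rw [← inner_neg_right]; congr 1; abel
      linarith
    -- identity: ‖z1 - zs‖² = s² - ‖z0-z1‖² + 2⟪z0-z1, zs-z1⟫
    have hI1 : ‖z1 - zs‖^2 = s^2 - ‖z0 - z1‖^2 + 2 * ⟪z0 - z1, zs - z1⟫ := by
      have e1 := real_inner_self_eq_norm_sq (z1 - zs)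
      have e2 := real_inner_self_eq_norm_sq (z0 - zs)
      have e3 := real_inner_self_eq_norm_sq (z0 - z1)
      simp only [inner_sub_left, inner_sub_right] at e1 e2 e3 ⊢
      rw [hs]
      linarith [real_inner_comm z0 z1, real_inner_comm z0 zs, real_inner_comm z1 zs]
    -- identity: ‖z0-z1‖² + 2⟪z0-zh, z1-zh⟫ = a² + b² + stuff; precisely
    have hI2 : ‖z0 - z1‖^2 + 2 * ⟪z0 - zh, z1 - zh⟫ = a^2 + b^2 := by
      have e1 := real_inner_self_eq_norm_sq (z0 - z1)
      have e2 := real_inner_self_eq_norm_sq (z0 - zh)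
      have e3 := real_inner_self_eq_norm_sq (z1 - zh)
      simp only [inner_sub_left, inner_sub_right] at e1 e2 e3 ⊢
      rw [ha, hb]
      linarith [real_inner_comm z0 z1, real_inner_comm z0 zh, real_inner_comm z1 zh]
    -- Lipschitz bound on cross term
    have hcross : ⟪F z0 - F zh, z1 - zh⟫ ≤ L * a * b := by
      have hcs := real_inner_le_norm (F z0 - F zh) (z1 - zh)
      have hl := hlip z0 hz0 zh hzhZ
      have hbnn : (0:ℝ) ≤ b := norm_nonneg _
      calc ⟪F z0 - F zh, z1 - zh⟫ ≤ ‖F z0 - F zh‖ * ‖z1 - zh‖ := hcs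
        _ ≤ L * a * b := by
            rw [← hb]
            exact mul_le_mul_of_nonneg_right hl hbnn
    -- combine
    have hchain : ‖z1 - zs‖^2 ≤ s^2 - a^2 - b^2 + 2 * η * (L * a * b) := by
      have step : ⟪z0 - z1, zs - z1⟫ ≤ -⟪z0 - zh, z1 - zh⟫ + η * ⟪F z0 - F zh, z1 - zh⟫ := by
        calc ⟪z0 - z1, zs - z1⟫ ≤ η * ⟪F zh, zs - z1⟫ := h2'
          _ = η * ⟪F zh, zs - zh⟫ + η * ⟪F zh, zh - z1⟫ := by rw [hsplit]; ring
          _ ≤ η * ⟪F zh, zh - z1⟫ := by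
              have := mul_le_mul_of_nonneg_left hsplit2 hη.le
              linarith
          _ = -(η * ⟪F z0, z1 - zh⟫) + η * ⟪F z0 - F zh, z1 - zh⟫ := by rw [hFsplit]; ring
          _ ≤ -⟪z0 - zh, z1 - zh⟫ + η * ⟪F z0 - F zh, z1 - zh⟫ := by linarith
      have hct : η * ⟪F z0 - F zh, z1 - zh⟫ ≤ η * (L * a * b) :=
        mul_le_mul_of_nonneg_left hcross hη.le
      linarith [hI1, hI2, step, hct]
    -- 2ηLab ≤ (ηLa)² + b²
    have hanb : (0:ℝ) ≤ a := norm_nonneg _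
    linarith [sq_nonneg (η * L * a - b), hr0, hchain]
  -- final combination
  have hwnn : (0:ℝ) ≤ ‖w‖ := norm_nonneg _
  have hann : (0:ℝ) ≤ a := norm_nonneg _
  have hbnn : (0:ℝ) ≤ b := norm_nonneg _
  have hsnn : (0:ℝ) ≤ s := norm_nonneg _
  have hip : ⟪w, z1 - z0⟫ ≤ ‖w‖ * ‖z0 - z1‖ := by
    have := real_inner_le_norm w (z1 - z0)
    rw [norm_sub_rev z1 z0] at this
    exact this
  have hW : ‖w‖ ≤ (1 + η*L + η^2*L^2) * a := by
    have h := mul_le_mul_of_nonneg_left hba htL0.le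
    linarith [hwn, hd, hba]
  have hD : ‖z0 - z1‖ ≤ (1 + η*L) * a := by linarith [hd, hba]
  have hdnn : (0:ℝ) ≤ ‖z0 - z1‖ := norm_nonneg _
  have hpos : 0 < 1 - η^2*L^2 := by nlinarith [htL, htL0]
  have hAnn : (0:ℝ) ≤ 1 + η*L + η^2*L^2 := by positivity
  rw [div_mul_eq_mul_div, le_div_iff₀ hpos]
  have key : ‖w‖^2 + ⟪w, z1 - z0⟫ ≤ (1 + η*L + η^2*L^2) * (2 + 2*η*L + η^2*L^2) * a^2 := by
    have hAa : (0:ℝ) ≤ (1 + η*L + η^2*L^2) * a := mul_nonneg hAnn hann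
    have p1 := mul_le_mul hW hD hdnn hAa
    have p2 := mul_le_mul hW hW hwnn hAa
    linarith [hip, p1, p2, sq_abs (‖w‖)]
  have hmain' : (1 - η^2*L^2) * a^2 ≤ s^2 := by linarith [hmain]
  have k2 := mul_le_mul_of_nonneg_right key hpos.le
  have k3 := mul_le_mul_of_nonneg_left hmain'
    (by positivity : (0:ℝ) ≤ (1 + η*L + η^2*L^2) * (2 + 2*η*L + η^2*L^2))
  linarith [k2, k3]
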